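/- Define sequences by β₀ = 1 and for k ≥ 1, β_k = 𝟙·A^{k−1}·B where A and B are as in the previous context. Then Σ_{k≥0} β_k z^k · (1 − 3z − 3z² + z³) = 1 + z; i.e., the generating function of the walk counts in the weighted tree equals (1+z)/(1 − 3z − 3z² + z³). -/

import Mathlib

def apat (i j : Fin 7) : ℚ :=
  if (i : ℕ) ≤ 3 ∧ ((j : ℕ) ≤ 2 ∨ (j : ℕ) = 4 ∨ (j : ℕ) = 5) then 1
  else if 1 ≤ (i : ℕ) ∧ (i : ℕ) ≤ 3 ∧ (j : ℕ) = 6 then 1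
  else if 4 ≤ (i : ℕ) ∧ (j : ℕ) = 3 then 1 else 0

def AmatQ : Matrix (Fin 7) (Fin 7) ℚ := Matrix.of apat

def Bvec : Fin 7 → ℚ := ![1, 1, 1, 1, 0, 0, 0]

/-- `𝟙 · A^k · B`. -/
def walk (k : ℕ) : ℚ := ∑ i, (AmatQ ^ k).mulVec Bvec i

lemma AmatQ_eq : AmatQ = !![1,1,1,0,1,1,0; 1,1,1,0,1,1,1; 1,1,1,0,1,1,1;
    1,1,1,0,1,1,1; 0,0,0,1,0,0,0; 0,0,0,1,0,0,0; 0,0,0,1,0,0,0] := by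
  funext i j
  fin_cases i <;> fin_cases j <;> rfl

lemma A2_eq : AmatQ ^ 2 = !![3,3,3,2,3,3,2; 3,3,3,3,3,3,2; 3,3,3,3,3,3,2;
    3,3,3,3,3,3,2; 1,1,1,0,1,1,1; 1,1,1,0,1,1,1; 1,1,1,0,1,1,1] := by
  rw [pow_two, AmatQ_eq]
  funext i j
  fin_cases i <;> fin_cases j <;>
    norm_num [Matrix.mul_apply, Fin.sum_univ_succ, Matrix.cons_val_succ]

lemma A3_eq : AmatQ ^ 3 = !![11,11,11,8,11,11,8; 12,12,12,8,12,12,9; 12,12,12,8,12,12,9;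
    12,12,12,8,12,12,9; 3,3,3,3,3,3,2; 3,3,3,3,3,3,2; 3,3,3,3,3,3,2] := by
  rw [pow_succ, A2_eq, AmatQ_eq]
  funext i j
  fin_cases i <;> fin_cases j <;>
    norm_num [Matrix.mul_apply, Fin.sum_univ_succ, Matrix.cons_val_succ]

lemma ones_vecMul_cube :
    Matrix.vecMul (fun _ => (1:ℚ)) (AmatQ ^ 3) =
      (3:ℚ) • Matrix.vecMul (fun _ => (1:ℚ)) (AmatQ ^ 2)
      + (3:ℚ) • Matrix.vecMul (fun _ => (1:ℚ)) AmatQ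
      - fun _ => (1:ℚ) := by
  rw [A3_eq, A2_eq, AmatQ_eq]
  have hones : (fun _ => (1:ℚ)) = (![1,1,1,1,1,1,1] : Fin 7 → ℚ) := by
    funext i; fin_cases i <;> rfl
  rw [hones]
  funext j
  fin_cases j <;>
    norm_num [Matrix.vecMul, dotProduct, Fin.sum_univ_succ, Matrix.cons_val_succ]

lemma walk_eq (k : ℕ) :
    walk k = dotProduct (Matrix.vecMul (fun _ => (1:ℚ)) (AmatQ ^ k)) Bvec := by
  simp only [walk, dotProduct, Matrix.mulVec, Matrix.vecMul]
  rw [Finset.sum_comm]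
  simp [dotProduct, Finset.mul_sum, mul_comm]

lemma walk_rec (k : ℕ) :
    walk (k + 3) = 3 * walk (k + 2) + 3 * walk (k + 1) - walk k := by
  have h3 : AmatQ ^ (k + 3) = AmatQ ^ 3 * AmatQ ^ k := by
    rw [show k + 3 = 3 + k from by omega, pow_add]
  have h2 : AmatQ ^ (k + 2) = AmatQ ^ 2 * AmatQ ^ k := by
    rw [show k + 2 = 2 + k from by omega, pow_add]
  have h1 : AmatQ ^ (k + 1) = AmatQ * AmatQ ^ k := by
    rw [show k + 1 = 1 + k from by omega, pow_add, pow_one]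
  simp only [walk_eq, h3, h2, h1, ← Matrix.vecMul_vecMul, ones_vecMul_cube,
    Matrix.sub_vecMul, Matrix.add_vecMul, Matrix.smul_vecMul,
    sub_dotProduct, add_dotProduct, smul_dotProduct, smul_eq_mul]

lemma walk0 : walk 0 = 4 := by
  norm_num [walk, Matrix.mulVec, dotProduct, Bvec, Fin.sum_univ_succ,
    Matrix.one_apply, Matrix.cons_val_succ]

lemma walk1 : walk 1 = 15 := by
  rw [show walk 1 = walk 1 from rfl]
  norm_num [walk, pow_one, AmatQ_eq, Matrix.mulVec, dotProduct, Bvec,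
    Fin.sum_univ_succ, Matrix.cons_val_succ]

lemma walk2 : walk 2 = 56 := by
  norm_num [walk, A2_eq, Matrix.mulVec, dotProduct, Bvec,
    Fin.sum_univ_succ, Matrix.cons_val_succ]

/-- With `β₀ = 1` and `β_k = 𝟙·A^{k-1}·B` for `k ≥ 1`, the generating function
of the walk counts satisfies `(Σ β_k z^k)·(1 - 3z - 3z² + z³) = 1 + z`. -/
theorem stmt19 :
    PowerSeries.mk (fun k => if k = 0 then (1 : ℚ) else walk (k - 1)) *
      (1 - 3 * PowerSeries.X - 3 * PowerSeries.X ^ 2 + PowerSeries.X ^ 3) =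
    1 + PowerSeries.X := by
  set b : ℕ → ℚ := fun k => if k = 0 then (1 : ℚ) else walk (k - 1) with hb
  set S := PowerSeries.mk b with hS
  have expand : S * (1 - 3 * PowerSeries.X - 3 * PowerSeries.X ^ 2 + PowerSeries.X ^ 3)
      = S - (3 : PowerSeries ℚ) * (S * PowerSeries.X ^ 1) - (3 : PowerSeries ℚ) * (S * PowerSeries.X ^ 2)
        + S * PowerSeries.X ^ 3 := by
    ring
  rw [expand]
  ext n
  have h3 : ((3 : PowerSeries ℚ)) = PowerSeries.C (3 : ℚ) := by
    simp [map_ofNat]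
  simp only [map_add, map_sub, h3, PowerSeries.coeff_C_mul, PowerSeries.coeff_mul_X_pow',
    PowerSeries.coeff_mk, PowerSeries.coeff_one, PowerSeries.coeff_X]
  match n with
  | 0 => simp [hS, hb, ← PowerSeries.coeff_zero_eq_constantCoeff, PowerSeries.coeff_mk]
  | 1 =>
    simp [hS, hb, ← PowerSeries.coeff_zero_eq_constantCoeff, PowerSeries.coeff_mk, walk0]
    norm_num
  | 2 =>
    simp [hS, hb, ← PowerSeries.coeff_zero_eq_constantCoeff, PowerSeries.coeff_mk,
      walk0, walk1]
    norm_num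
  | 3 =>
    simp [hS, hb, ← PowerSeries.coeff_zero_eq_constantCoeff, PowerSeries.coeff_mk,
      walk0, walk1, walk2]
    norm_num
  | (m+4) =>
    have hr := walk_rec m
    have e1 : m + 4 - 1 = m + 3 := by omega
    have e2 : m + 4 - 2 = m + 2 := by omega
    have e3 : m + 4 - 3 = m + 1 := by omega
    have e4 : m + 3 - 1 = m + 2 := by omega
    have e5 : m + 2 - 1 = m + 1 := by omega
    have e6 : m + 1 - 1 = m := by omega
    simp only [hS, hb, PowerSeries.coeff_mk, e1, e2, e3, e4, e5, e6,
      Nat.add_eq_zero, and_false, if_false, Nat.succ_ne_zero]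
    rw [if_neg (by omega : ¬ m + 4 = 1)]
    norm_num
    linarith [hr]
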